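/- arXiv:2211.11624 — 5 statements merged into one kernel-verified Lean document; each statement's English description precedes it below -/
import Mathlib

section
/- Let K₀ and K₁ be kernels with positive definite Gram matrices at the (n+1)-point design X_n ∪ {x}. Writing Φ_KL(X) = (1/2)[tr(K₀(X)K₁(X)⁻¹) + tr(K₁(X)K₀(X)⁻¹)] − |X|, one has Φ_KL(X_n ∪ {x}) = Φ_KL(X_n) + (1/2)[E₁{e₀(x)²}/E₀{e₀(x)²} + E₀{e₁(x)²}/E₁{e₁(x)²}] − 1, where E_i{e_j(x)²} is the mean squared prediction error at x of the kriging predictor based on kernel K_j when the true covariance is K_i. -/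
open Matrix

/-- Mean squared prediction error at `x` of the kriging predictor based on kernel `Kj`
(with cross-covariance vector `kj` and Gram matrix `Gj` at the design) when the true
covariance is `Ki` (Gram matrix `Gi`, cross-covariance vector `ki`). -/
noncomputable def mse {n : ℕ} (Kixx : ℝ) (ki kj : Fin n → ℝ)
    (Gi Gj : Matrix (Fin n) (Fin n) ℝ) : ℝ :=
  Kixx + kj ⬝ᵥ (Gj⁻¹ * Gi * Gj⁻¹) *ᵥ kj - 2 * (kj ⬝ᵥ Gj⁻¹ *ᵥ ki)


lemma trace_fromBlocks' {m l : Type*} [Fintype m] [Fintype l]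
    (A : Matrix m m ℝ) (B : Matrix m l ℝ) (C : Matrix l m ℝ) (D : Matrix l l ℝ) :
    (fromBlocks A B C D).trace = A.trace + D.trace := by
  simp [Matrix.trace, Fintype.sum_sum_type, fromBlocks]

lemma trace_submatrix_equiv' {m l : Type*} [Fintype m] [Fintype l]
    (A : Matrix m m ℝ) (e : l ≃ m) : (A.submatrix e e).trace = A.trace := by
  simp only [Matrix.trace, Matrix.diag, submatrix_apply]
  exact Fintype.sum_equiv e _ _ (fun i => rfl)

lemma of_const_eq_smul_one (c : ℝ) :
    (Matrix.of (fun _ _ => c) : Matrix (Fin 1) (Fin 1) ℝ) = c • (1 : Matrix (Fin 1) (Fin 1) ℝ) := by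
  ext i j; fin_cases i; fin_cases j; simp

lemma trace_col_mul_row' {n : ℕ} (a b : Fin n → ℝ) :
    (replicateCol (Fin 1) a * replicateRow (Fin 1) b).trace = a ⬝ᵥ b :=
  Matrix.trace_replicateCol_mul_replicateRow _ _

lemma core {n : ℕ} (A B : Matrix (Fin n) (Fin n) ℝ) (a b : Fin n → ℝ) (α β : ℝ)
    (hA : A.PosDef) (hAs : Aᵀ = A)
    (hdet : 0 < (fromBlocks A (replicateCol (Fin 1) a) (replicateRow (Fin 1) a) (Matrix.of fun _ _ => α)).det) :
    (fromBlocks B (replicateCol (Fin 1) b) (replicateRow (Fin 1) b) (Matrix.of fun _ _ => β) *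
      (fromBlocks A (replicateCol (Fin 1) a) (replicateRow (Fin 1) a) (Matrix.of fun _ _ => α))⁻¹).trace
      = (B * A⁻¹).trace +
        (β + a ⬝ᵥ (A⁻¹ * B * A⁻¹) *ᵥ a - 2 * (a ⬝ᵥ A⁻¹ *ᵥ b)) / (α - a ⬝ᵥ A⁻¹ *ᵥ a) := by
  have hdetA : IsUnit A.det := isUnit_iff_ne_zero.2 hA.det_pos.ne'
  haveI : Invertible A := A.invertibleOfIsUnitDet hdetA
  set u := A⁻¹ *ᵥ a with hu
  have hAinvT : A⁻¹ᵀ = A⁻¹ := by rw [transpose_nonsing_inv, hAs]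
  have hvm : a ᵥ* A⁻¹ = u := by rw [← hAinvT, vecMul_transpose]
  have hAmu : A *ᵥ u = a := by
    rw [hu, mulVec_mulVec, mul_nonsing_inv _ hdetA, one_mulVec]
  set s := α - a ⬝ᵥ u with hsdef
  have hs : 0 < s := by
    have h1 : (fromBlocks A (replicateCol (Fin 1) a) (replicateRow (Fin 1) a) (Matrix.of fun _ _ => α)).det
        = A.det * s := by
      rw [det_fromBlocks₁₁, invOf_eq_nonsing_inv]
      congr 1
      have h2 : replicateRow (Fin 1) a * A⁻¹ * replicateCol (Fin 1) a
          = Matrix.of fun _ _ => (a ⬝ᵥ u : ℝ) := by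
        rw [← replicateRow_vecMul, hvm, replicateRow_mul_replicateCol]
        congr 1
        ext _ _
        rw [dotProduct_comm]
      rw [h2]
      have h3 : ((Matrix.of fun _ _ => α) - Matrix.of fun _ _ => (a ⬝ᵥ u : ℝ) :
          Matrix (Fin 1) (Fin 1) ℝ) = Matrix.of fun _ _ => s := by
        ext _ _; simp [hsdef]
      rw [h3, det_fin_one]
      rfl
    rw [h1] at hdet
    nlinarith [hA.det_pos]
  have hs0 : s ≠ 0 := hs.ne'
  have hAcol : A * replicateCol (Fin 1) u = replicateCol (Fin 1) a := by rw [← replicateCol_mulVec, hAmu]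
  have hrowA : replicateRow (Fin 1) a * A⁻¹ = replicateRow (Fin 1) u := by rw [← replicateRow_vecMul, hvm]
  have hrc : replicateRow (Fin 1) a * replicateCol (Fin 1) u = (a ⬝ᵥ u) • (1 : Matrix (Fin 1) (Fin 1) ℝ) := by
    rw [replicateRow_mul_replicateCol, of_const_eq_smul_one]
  set Ninv : Matrix (Fin n ⊕ Fin 1) (Fin n ⊕ Fin 1) ℝ :=
    fromBlocks (A⁻¹ + s⁻¹ • (replicateCol (Fin 1) u * replicateRow (Fin 1) u))
      (-(s⁻¹) • replicateCol (Fin 1) u) (-(s⁻¹) • replicateRow (Fin 1) u) (s⁻¹ • 1) with hNinv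
  have hmul : fromBlocks A (replicateCol (Fin 1) a) (replicateRow (Fin 1) a) (Matrix.of fun _ _ => α) * Ninv = 1 := by
    rw [hNinv, fromBlocks_multiply, ← fromBlocks_one]
    have e11 : A * (A⁻¹ + s⁻¹ • (replicateCol (Fin 1) u * replicateRow (Fin 1) u)) +
        replicateCol (Fin 1) a * (-(s⁻¹) • replicateRow (Fin 1) u) = 1 := by
      rw [Matrix.mul_add, Matrix.mul_smul, Matrix.mul_smul, ← Matrix.mul_assoc, hAcol,
        mul_nonsing_inv _ hdetA, neg_smul, add_neg_cancel_right]
    have e12 : A * (-(s⁻¹) • replicateCol (Fin 1) u) + replicateCol (Fin 1) a * (s⁻¹ • (1 : Matrix (Fin 1) (Fin 1) ℝ)) = 0 := by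
      simp only [Matrix.mul_smul, Matrix.mul_one, hAcol]
      module
    have e21 : replicateRow (Fin 1) a * (A⁻¹ + s⁻¹ • (replicateCol (Fin 1) u * replicateRow (Fin 1) u)) +
        (Matrix.of fun _ _ => α : Matrix (Fin 1) (Fin 1) ℝ) * (-(s⁻¹) • replicateRow (Fin 1) u) = 0 := by
      rw [Matrix.mul_add, hrowA, Matrix.mul_smul, ← Matrix.mul_assoc, hrc,
        of_const_eq_smul_one α]
      simp only [Matrix.smul_mul, Matrix.one_mul]
      have hinv1 : s⁻¹ * s = 1 := inv_mul_cancel₀ hs0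
      match_scalars
      linear_combination s⁻¹ * hsdef - hinv1
    have e22 : replicateRow (Fin 1) a * (-(s⁻¹) • replicateCol (Fin 1) u) + (Matrix.of fun _ _ => α : Matrix (Fin 1) (Fin 1) ℝ) * (s⁻¹ • (1 : Matrix (Fin 1) (Fin 1) ℝ)) = 1 := by
      rw [Matrix.mul_smul, hrc, of_const_eq_smul_one α]
      simp only [Matrix.smul_mul, Matrix.one_mul, Matrix.mul_one]
      have hinv1 : s⁻¹ * s = 1 := inv_mul_cancel₀ hs0
      match_scalars
      linear_combination (-(s⁻¹)) * hsdef + hinv1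
    rw [e11, e12, e21, e22]
  have hinv : (fromBlocks A (replicateCol (Fin 1) a) (replicateRow (Fin 1) a) (Matrix.of fun _ _ => α))⁻¹ = Ninv :=
    inv_eq_right_inv hmul
  rw [hinv, hNinv, fromBlocks_multiply, trace_fromBlocks']
  have t11 : (B * (A⁻¹ + s⁻¹ • (replicateCol (Fin 1) u * replicateRow (Fin 1) u)) +
      replicateCol (Fin 1) b * (-(s⁻¹) • replicateRow (Fin 1) u)).trace
      = (B * A⁻¹).trace + s⁻¹ * (u ⬝ᵥ (B *ᵥ u)) - s⁻¹ * (u ⬝ᵥ b) := by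
    rw [Matrix.mul_add, Matrix.mul_smul, Matrix.mul_smul, ← Matrix.mul_assoc, ← replicateCol_mulVec]
    simp only [trace_add, trace_smul, trace_col_mul_row', smul_eq_mul]
    rw [dotProduct_comm (B *ᵥ u) u, dotProduct_comm b u]
    ring
  have t22 : (replicateRow (Fin 1) b * (-(s⁻¹) • replicateCol (Fin 1) u) +
      (Matrix.of fun _ _ => β) * (s⁻¹ • (1 : Matrix (Fin 1) (Fin 1) ℝ))).trace = s⁻¹ * β - s⁻¹ * (b ⬝ᵥ u) := by
    rw [Matrix.mul_smul, replicateRow_mul_replicateCol, of_const_eq_smul_one, of_const_eq_smul_one β]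
    simp only [Matrix.smul_mul, Matrix.mul_one, trace_smul, trace_one, smul_eq_mul]
    simp [Fintype.card]
    ring
  rw [t11, t22]
  have h4 : a ⬝ᵥ (A⁻¹ * B * A⁻¹) *ᵥ a = u ⬝ᵥ (B *ᵥ u) := by
    rw [← mulVec_mulVec, ← mulVec_mulVec, dotProduct_mulVec a A⁻¹, hvm]
  have h5 : a ⬝ᵥ A⁻¹ *ᵥ b = u ⬝ᵥ b := by rw [dotProduct_mulVec, hvm]
  rw [h4, h5, dotProduct_comm b u]
  field_simp
  ring

lemma mse_self {n : ℕ} (α : ℝ) (a : Fin n → ℝ) (G : Matrix (Fin n) (Fin n) ℝ)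
    (hG : G.PosDef) : mse α a a G G = α - a ⬝ᵥ G⁻¹ *ᵥ a := by
  unfold mse
  rw [nonsing_inv_mul G (isUnit_iff_ne_zero.2 hG.det_pos.ne'), Matrix.one_mul]
  ring

/-- Adding a point `x` to the design `Xₙ` increases the symmetric KL criterion
`Φ_KL(X) = (1/2)[tr(K₀(X)K₁(X)⁻¹) + tr(K₁(X)K₀(X)⁻¹)] − |X|` by
`(1/2)[E₁{e₀(x)²}/E₀{e₀(x)²} + E₀{e₁(x)²}/E₁{e₁(x)²}] − 1`. -/
theorem stmt_6 {X : Type*} (K₀ K₁ : X → X → ℝ) (n : ℕ) (pts : Fin n → X) (x : X)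
    (G₀ G₁ : Matrix (Fin n) (Fin n) ℝ)
    (hG₀ : G₀ = Matrix.of fun i j => K₀ (pts i) (pts j))
    (hG₁ : G₁ = Matrix.of fun i j => K₁ (pts i) (pts j))
    (G₀' G₁' : Matrix (Fin (n + 1)) (Fin (n + 1)) ℝ)
    (hG₀' : G₀' = Matrix.of fun i j => K₀ ((Fin.snoc pts x : Fin (n+1) → X) i) ((Fin.snoc pts x : Fin (n+1) → X) j))
    (hG₁' : G₁' = Matrix.of fun i j => K₁ ((Fin.snoc pts x : Fin (n+1) → X) i) ((Fin.snoc pts x : Fin (n+1) → X) j))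
    (hG₀pd : G₀.PosDef) (hG₁pd : G₁.PosDef)
    (hG₀'pd : G₀'.PosDef) (hG₁'pd : G₁'.PosDef)
    (k₀ k₁ : Fin n → ℝ)
    (hk₀ : k₀ = fun i => K₀ x (pts i)) (hk₁ : k₁ = fun i => K₁ x (pts i)) :
    (1 / 2) * ((G₀' * G₁'⁻¹).trace + (G₁' * G₀'⁻¹).trace) - (n + 1 : ℝ) =
      (1 / 2) * ((G₀ * G₁⁻¹).trace + (G₁ * G₀⁻¹).trace) - (n : ℝ) +
        (1 / 2) * (mse (K₁ x x) k₁ k₀ G₁ G₀ / mse (K₀ x x) k₀ k₀ G₀ G₀ +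
          mse (K₀ x x) k₀ k₁ G₀ G₁ / mse (K₁ x x) k₁ k₁ G₁ G₁) - 1 := by
  set e : Fin n ⊕ Fin 1 ≃ Fin (n + 1) := finSumFinEquiv with he
  have hna : (Fin.natAdd n (0 : Fin 1) : Fin (n+1)) = Fin.last n := by
    ext; simp
  have hblock : ∀ (K : X → X → ℝ) (G : Matrix (Fin n) (Fin n) ℝ)
      (G' : Matrix (Fin (n+1)) (Fin (n+1)) ℝ) (k : Fin n → ℝ),
      G = Matrix.of (fun i j => K (pts i) (pts j)) →
      G' = Matrix.of (fun i j => K ((Fin.snoc pts x : Fin (n+1) → X) i)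
        ((Fin.snoc pts x : Fin (n+1) → X) j)) →
      k = (fun i => K x (pts i)) → G'.IsHermitian →
      G'.submatrix e e
        = fromBlocks G (replicateCol (Fin 1) k) (replicateRow (Fin 1) k) (Matrix.of fun _ _ => K x x) := by
    intro K G G' k hG hG'' hk hH
    have hsnoc : ∀ i : Fin n, (Fin.snoc pts x : Fin (n+1) → X) (Fin.castAdd 1 i) = pts i := by
      intro i
      show (Fin.snoc pts x : Fin (n+1) → X) i.castSucc = pts i
      simp
    have hsnl : (Fin.snoc pts x : Fin (n+1) → X) (Fin.natAdd n (0 : Fin 1)) = x := by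
      rw [hna]; simp
    have hherm : ∀ p q, G' p q = G' q p := by
      intro p q
      have := hH.apply p q
      simpa using this.symm
    ext i j
    cases i with
    | inl i =>
      cases j with
      | inl j =>
        simp only [submatrix_apply, he, finSumFinEquiv_apply_left, fromBlocks_apply₁₁,
          hG'', hG, Matrix.of_apply, hsnoc]
      | inr j =>
        have hj : j = 0 := Subsingleton.elim _ _
        subst hj
        simp only [submatrix_apply, he, finSumFinEquiv_apply_left, finSumFinEquiv_apply_right,
          fromBlocks_apply₁₂, hk, replicateCol_apply]
        rw [hherm, hG'']
        simp only [Matrix.of_apply, hsnoc, hsnl]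
    | inr i =>
      have hi : i = 0 := Subsingleton.elim _ _
      subst hi
      cases j with
      | inl j =>
        simp only [submatrix_apply, he, finSumFinEquiv_apply_left, finSumFinEquiv_apply_right,
          fromBlocks_apply₂₁, hk, replicateRow_apply, hG'', Matrix.of_apply, hsnoc, hsnl]
      | inr j =>
        have hj : j = 0 := Subsingleton.elim _ _
        subst hj
        simp only [submatrix_apply, he, finSumFinEquiv_apply_right, fromBlocks_apply₂₂,
          hG'', Matrix.of_apply, hsnl]
  have hG₀s : G₀ᵀ = G₀ := by
    rw [← conjTranspose_eq_transpose_of_trivial]; exact hG₀pd.isHermitian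
  have hG₁s : G₁ᵀ = G₁ := by
    rw [← conjTranspose_eq_transpose_of_trivial]; exact hG₁pd.isHermitian
  have h0 := hblock K₀ G₀ G₀' k₀ hG₀ hG₀' hk₀ hG₀'pd.isHermitian
  have h1 := hblock K₁ G₁ G₁' k₁ hG₁ hG₁' hk₁ hG₁'pd.isHermitian
  have tr01 : (G₀' * G₁'⁻¹).trace = (G₀ * G₁⁻¹).trace +
      mse (K₀ x x) k₀ k₁ G₀ G₁ / mse (K₁ x x) k₁ k₁ G₁ G₁ := by
    have hdet1 : 0 < (fromBlocks G₁ (replicateCol (Fin 1) k₁) (replicateRow (Fin 1) k₁)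
        (Matrix.of fun _ _ => K₁ x x)).det := by
      rw [← h1, det_submatrix_equiv_self]; exact hG₁'pd.det_pos
    have hc := core G₁ G₀ k₁ k₀ (K₁ x x) (K₀ x x) hG₁pd hG₁s hdet1
    rw [← h0, ← h1, inv_submatrix_equiv, submatrix_mul_equiv, trace_submatrix_equiv'] at hc
    rw [hc, mse_self (K₁ x x) k₁ G₁ hG₁pd]
    rfl
  have tr10 : (G₁' * G₀'⁻¹).trace = (G₁ * G₀⁻¹).trace +
      mse (K₁ x x) k₁ k₀ G₁ G₀ / mse (K₀ x x) k₀ k₀ G₀ G₀ := by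
    have hdet0 : 0 < (fromBlocks G₀ (replicateCol (Fin 1) k₀) (replicateRow (Fin 1) k₀)
        (Matrix.of fun _ _ => K₀ x x)).det := by
      rw [← h0, det_submatrix_equiv_self]; exact hG₀'pd.det_pos
    have hc := core G₀ G₁ k₀ k₁ (K₀ x x) (K₁ x x) hG₀pd hG₀s hdet0
    rw [← h0, ← h1, inv_submatrix_equiv, submatrix_mul_equiv, trace_submatrix_equiv'] at hc
    rw [hc, mse_self (K₀ x x) k₀ G₀ hG₀pd]
    rfl
  rw [tr01, tr10]
  ring
end

section
/- Let μ be a probability measure on a compact set X ⊂ ℝ^d and K₀, K₁ kernels with invertible Gram matrices K₀, K₁ at X_n. Then ∫_X E₀{[e₁(x) − e₀(x)]²} dμ(x) = tr[K₀⁻¹A₀(μ) + K₁⁻¹K₀K₁⁻¹A₁(μ) − 2K₁⁻¹A₀₁(μ)], where A_i(μ) = ∫ k_i(x)k_i(x)ᵀ dμ(x) and A₀₁(μ) = ∫ k₀(x)k₁(x)ᵀ dμ(x). -/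
open Matrix MeasureTheory

lemma quad_eq_sum {n : ℕ} (M : Matrix (Fin n) (Fin n) ℝ) (u v : Fin n → ℝ) :
    u ⬝ᵥ M *ᵥ v = ∑ i, ∑ j, M i j * (u i * v j) := by
  simp only [dotProduct, mulVec, Finset.mul_sum]
  exact Finset.sum_congr rfl fun i _ => Finset.sum_congr rfl fun j _ => by ring

lemma quad_integrable {X : Type*} [MeasurableSpace X] (μ : Measure X) {n : ℕ}
    (M : Matrix (Fin n) (Fin n) ℝ) (u v : X → Fin n → ℝ)
    (hint : ∀ i j, Integrable (fun x => u x i * v x j) μ) :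
    Integrable (fun x => u x ⬝ᵥ M *ᵥ v x) μ := by
  simp only [quad_eq_sum]
  exact integrable_finset_sum _ fun i _ =>
    integrable_finset_sum _ fun j _ => (hint i j).const_mul _

lemma quad_integral {X : Type*} [MeasurableSpace X] (μ : Measure X) {n : ℕ}
    (M : Matrix (Fin n) (Fin n) ℝ) (u v : X → Fin n → ℝ)
    (hint : ∀ i j, Integrable (fun x => u x i * v x j) μ) :
    ∫ x, u x ⬝ᵥ M *ᵥ v x ∂μ =
      (M * Matrix.of fun i j => ∫ x, v x i * u x j ∂μ).trace := by
  simp only [quad_eq_sum]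
  erw [integral_finset_sum _ fun i _ =>
    integrable_finset_sum _ fun j _ => (hint i j).const_mul _]
  simp only [integral_finset_sum _ fun j _ => (hint _ j).const_mul _]
  simp only [Matrix.trace, Matrix.diag, Matrix.mul_apply, Matrix.of_apply]
  refine Finset.sum_congr rfl fun i _ => Finset.sum_congr rfl fun j _ => ?_
  rw [MeasureTheory.integral_const_mul]
  congr 1
  exact integral_congr_ae (Filter.Eventually.of_forall fun x => mul_comm _ _)

/-- Integrated difference of MSEs: `∫ E₀{[e₁(x) − e₀(x)]²} dμ(x)
= tr[K₀⁻¹A₀(μ) + K₁⁻¹K₀K₁⁻¹A₁(μ) − 2K₁⁻¹A₀₁(μ)]`, where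
`A_i(μ) = ∫ k_i(x)k_i(x)ᵀ dμ` and `A₀₁(μ) = ∫ k₀(x)k₁(x)ᵀ dμ`. -/
theorem stmt_7 {X : Type*} [MeasurableSpace X] (μ : Measure X) [IsProbabilityMeasure μ]
    (n : ℕ) (k₀ k₁ : X → Fin n → ℝ)
    (K₀ K₁ : Matrix (Fin n) (Fin n) ℝ)
    (hK₀inv : IsUnit K₀.det) (hK₁inv : IsUnit K₁.det)
    (hk₀m : ∀ i, Measurable fun x => k₀ x i) (hk₁m : ∀ i, Measurable fun x => k₁ x i)
    (hint₀ : ∀ i j, Integrable (fun x => k₀ x i * k₀ x j) μ)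
    (hint₁ : ∀ i j, Integrable (fun x => k₁ x i * k₁ x j) μ)
    (hint₀₁ : ∀ i j, Integrable (fun x => k₀ x i * k₁ x j) μ)
    (A₀ A₁ A₀₁ : Matrix (Fin n) (Fin n) ℝ)
    (hA₀ : A₀ = Matrix.of fun i j => ∫ x, k₀ x i * k₀ x j ∂μ)
    (hA₁ : A₁ = Matrix.of fun i j => ∫ x, k₁ x i * k₁ x j ∂μ)
    (hA₀₁ : A₀₁ = Matrix.of fun i j => ∫ x, k₀ x i * k₁ x j ∂μ) :
    ∫ x, (k₀ x ⬝ᵥ K₀⁻¹ *ᵥ k₀ x + k₁ x ⬝ᵥ (K₁⁻¹ * K₀ * K₁⁻¹) *ᵥ k₁ x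
        - 2 * (k₁ x ⬝ᵥ K₁⁻¹ *ᵥ k₀ x)) ∂μ =
      (K₀⁻¹ * A₀ + K₁⁻¹ * K₀ * K₁⁻¹ * A₁ - 2 • (K₁⁻¹ * A₀₁)).trace := by
  have h0 := quad_integrable μ K₀⁻¹ k₀ k₀ hint₀
  have h1 := quad_integrable μ (K₁⁻¹ * K₀ * K₁⁻¹) k₁ k₁ hint₁
  have h01 := quad_integrable μ K₁⁻¹ k₁ k₀ (fun i j => by
    simpa using (hint₀₁ j i).congr (Filter.Eventually.of_forall fun x => mul_comm _ _))
  have hsub := integral_sub (h0.add h1) (h01.const_mul 2)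
  simp only [Pi.add_apply] at hsub
  rw [hsub, integral_add h0 h1, MeasureTheory.integral_const_mul]
  rw [quad_integral μ K₀⁻¹ k₀ k₀ hint₀,
    quad_integral μ (K₁⁻¹ * K₀ * K₁⁻¹) k₁ k₁ hint₁,
    quad_integral μ K₁⁻¹ k₁ k₀ (fun i j => by
      simpa using (hint₀₁ j i).congr (Filter.Eventually.of_forall fun x => mul_comm _ _))]
  rw [hA₀, hA₁, hA₀₁, Matrix.trace_sub, Matrix.trace_add, Matrix.trace_smul]
  simp [smul_eq_mul]
end

section
/- Let G be a finite graph on vertices {1,...,n} and consider Q(w) = Σ_{(i,j)∈E(G)} w_i w_j over the probability simplex (w_i ≥ 0, Σw_i = 1), where each unordered edge {i,j} is counted twice (ordered pairs). If G contains a complete subgraph on m vertices and m is the maximal clique size, then the maximum of Q over the simplex equals 1 − 1/m, attained at the uniform weights 1/m on the vertices of a maximum clique. -/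
open Finset
section MSaux

variable {n : ℕ} (G : SimpleGraph (Fin n)) [DecidableRel G.Adj]

/-- bilinear form -/
def MSQB (u v : Fin n → ℝ) : ℝ := ∑ i, ∑ j, if G.Adj i j then u i * v j else 0

lemma MSQB_comm (u v : Fin n → ℝ) : MSQB G u v = MSQB G v u := by
  rw [MSQB, MSQB, Finset.sum_comm]
  refine Finset.sum_congr rfl fun i _ => Finset.sum_congr rfl fun j _ => ?_
  by_cases h : G.Adj i j
  · rw [if_pos h, if_pos h.symm, mul_comm]
  · rw [if_neg h, if_neg (fun h' => h h'.symm)]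

lemma MSQB_add_left (u u' v : Fin n → ℝ) :
    MSQB G (u + u') v = MSQB G u v + MSQB G u' v := by
  rw [MSQB, MSQB, MSQB, ← Finset.sum_add_distrib]
  refine Finset.sum_congr rfl fun i _ => ?_
  rw [← Finset.sum_add_distrib]
  refine Finset.sum_congr rfl fun j _ => ?_
  by_cases h : G.Adj i j <;> simp [h, add_mul]

lemma MSQB_add_right (u v v' : Fin n → ℝ) :
    MSQB G u (v + v') = MSQB G u v + MSQB G u v' := by
  rw [MSQB_comm, MSQB_add_left, MSQB_comm G v u, MSQB_comm G v' u]

lemma MS_shift (w : Fin n → ℝ) (hw0 : ∀ k, 0 ≤ w k) (i j : Fin n) (hij : i ≠ j)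
    (hadj : ¬ G.Adj i j)
    (hA : (∑ a, if G.Adj a i then w a else 0) ≤ ∑ a, if G.Adj a j then w a else 0) :
    ∃ w' : Fin n → ℝ, (∀ k, 0 ≤ w' k) ∧ (∑ k, w' k = ∑ k, w k) ∧
      (∀ k, w' k ≠ 0 → k ≠ i ∧ (w k ≠ 0 ∨ k = j)) ∧ MSQB G w w ≤ MSQB G w' w' := by
  classical
  set v : Fin n → ℝ := fun k => (if k = i then -(w i) else 0) + (if k = j then w i else 0)
    with hv_def
  have hv_supp : ∀ k, v k ≠ 0 → k = i ∨ k = j := by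
    intro k hk
    by_contra h
    push_neg at h
    simp [hv_def, h.1, h.2] at hk
  refine ⟨w + v, ?_, ?_, ?_, ?_⟩
  · intro k
    by_cases h1 : k = i
    · subst h1; simp [hv_def, hij]
    · by_cases h2 : k = j
      · subst h2; simp [hv_def, h1]
        have := hw0 i; have := hw0 k; linarith
      · simp [hv_def, h1, h2, hw0 k]
  · have : ∑ k, v k = 0 := by
      rw [Finset.sum_add_distrib, Finset.sum_ite_eq' univ i, Finset.sum_ite_eq' univ j]
      simp
    simp only [Pi.add_apply, Finset.sum_add_distrib, this, add_zero]
  · intro k hk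
    by_cases h1 : k = i
    · subst h1; simp [hv_def, Pi.add_apply, hij] at hk
    · by_cases h2 : k = j
      · exact ⟨h1, Or.inr h2⟩
      · refine ⟨h1, Or.inl ?_⟩
        simpa [hv_def, Pi.add_apply, h1, h2] using hk
  · have hvv : MSQB G v v = 0 := by
      refine Finset.sum_eq_zero fun a _ => Finset.sum_eq_zero fun b _ => ?_
      by_cases h : G.Adj a b
      · rw [if_pos h]
        rcases eq_or_ne (v a) 0 with h1 | h1
        · rw [h1, zero_mul]
        rcases eq_or_ne (v b) 0 with h2 | h2
        · rw [h2, mul_zero]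
        exfalso
        rcases hv_supp a h1 with rfl | rfl <;> rcases hv_supp b h2 with rfl | rfl
        · exact G.irrefl h
        · exact hadj h
        · exact hadj h.symm
        · exact G.irrefl h
      · rw [if_neg h]
    have hwv : MSQB G w v = w i * ((∑ a, if G.Adj a j then w a else 0) -
        (∑ a, if G.Adj a i then w a else 0)) := by
      have hinner : ∀ a : Fin n, (∑ b, if G.Adj a b then w a * v b else 0) =
          (if G.Adj a i then w a else 0) * (-(w i)) +
          (if G.Adj a j then w a else 0) * (w i) := by
        intro a
        have : ∀ b : Fin n, (if G.Adj a b then w a * v b else 0) =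
            (if b = i then (if G.Adj a i then w a * (-(w i)) else 0) else 0) +
            (if b = j then (if G.Adj a j then w a * (w i) else 0) else 0) := by
          intro b
          by_cases h1 : b = i
          · subst h1; by_cases h : G.Adj a b <;> simp [hv_def, h, hij]
          · by_cases h2 : b = j
            · subst h2; by_cases h : G.Adj a b <;> simp [hv_def, h, h1]
            · by_cases h : G.Adj a b <;> simp [hv_def, h, h1, h2]
        rw [Finset.sum_congr rfl fun b _ => this b, Finset.sum_add_distrib,
          Finset.sum_ite_eq' univ i, Finset.sum_ite_eq' univ j]
        simp only [Finset.mem_univ, if_true, ite_mul, zero_mul]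
      rw [MSQB, Finset.sum_congr rfl fun a _ => hinner a, Finset.sum_add_distrib,
        ← Finset.sum_mul, ← Finset.sum_mul]
      ring
    have hvw : MSQB G v w = MSQB G w v := MSQB_comm G v w
    rw [MSQB_add_left, MSQB_add_right, MSQB_add_right, hvv, hvw, hwv]
    have h1 : 0 ≤ w i := hw0 i
    nlinarith [sub_nonneg.mpr hA]

lemma MS_upper (m : ℕ) (hm : 1 ≤ m)
    (hmax : ∀ (k : ℕ) (t : Finset (Fin n)), G.IsNClique k t → k ≤ m) :
    ∀ (N : ℕ) (w : Fin n → ℝ), (univ.filter fun i => w i ≠ 0).card ≤ N →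
      (∀ i, 0 ≤ w i) → ∑ i, w i = 1 → MSQB G w w ≤ 1 - 1 / m := by
  intro N
  induction N with
  | zero =>
    intro w hc _ hsum
    exfalso
    rw [Nat.le_zero, Finset.card_eq_zero, Finset.filter_eq_empty_iff] at hc
    simp only [not_ne_iff] at hc
    rw [Finset.sum_congr rfl fun i _ => hc (Finset.mem_univ i)] at hsum
    simp at hsum
  | succ N ih =>
    intro w hc hw0 hsum
    set T := univ.filter fun i => w i ≠ 0 with hT_def
    have hTsub : ∀ x, x ∉ T → w x = 0 := by
      intro x hx; by_contra h; exact hx (Finset.mem_filter.mpr ⟨Finset.mem_univ x, h⟩)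
    by_cases hcl : ∀ a ∈ T, ∀ b ∈ T, a ≠ b → G.Adj a b
    · -- support is a clique
      have hTm : T.card ≤ m := by
        refine hmax T.card T ⟨?_, rfl⟩
        intro a ha b hb hab
        exact hcl a (Finset.mem_coe.mp ha) b (Finset.mem_coe.mp hb) hab
      have hT1 : ∑ a ∈ T, w a = 1 := by
        rw [← hsum]
        exact (Finset.sum_subset (Finset.subset_univ T)
          (fun x _ hx => hTsub x hx)).symm ▸ rfl
      have hQT : MSQB G w w = ∑ a ∈ T, ∑ b ∈ T, if G.Adj a b then w a * w b else 0 := by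
        rw [MSQB]
        rw [← Finset.sum_subset (Finset.subset_univ T) (fun x _ hx => ?_)]
        · refine Finset.sum_congr rfl fun a _ => ?_
          rw [← Finset.sum_subset (Finset.subset_univ T) (fun x _ hx => ?_)]
          simp [hTsub x hx]
        · refine Finset.sum_eq_zero fun b _ => ?_
          simp [hTsub x hx]
      have hQT2 : MSQB G w w = 1 - ∑ a ∈ T, (w a)^2 := by
        rw [hQT]
        have hterm : ∀ a ∈ T, (∑ b ∈ T, if G.Adj a b then w a * w b else 0) =
            (∑ b ∈ T, w a * w b) - (w a)^2 := by
          intro a haT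
          have : ∀ b ∈ T, (if G.Adj a b then w a * w b else 0) =
              w a * w b - (if b = a then w a * w b else 0) := by
            intro b hbT
            by_cases hba : b = a
            · subst hba; simp [G.irrefl]
            · rw [if_neg hba, if_pos (hcl a haT b hbT fun h => hba h.symm)]
              ring
          rw [Finset.sum_congr rfl this, Finset.sum_sub_distrib, Finset.sum_ite_eq' T a]
          rw [if_pos haT]; ring
        rw [Finset.sum_congr rfl hterm, Finset.sum_sub_distrib]
        have : ∑ a ∈ T, ∑ b ∈ T, w a * w b = 1 := by
          rw [← Finset.sum_mul_sum, hT1, one_mul]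
        rw [this]
      rw [hQT2]
      have hS0 : (0:ℝ) ≤ ∑ a ∈ T, (w a)^2 := Finset.sum_nonneg fun a _ => sq_nonneg _
      have hcs : ((1:ℝ))^2 ≤ (T.card : ℝ) * ∑ a ∈ T, (w a)^2 := by
        rw [← hT1]; exact sq_sum_le_card_mul_sum_sq
      have hcard : (T.card : ℝ) ≤ (m : ℝ) := by exact_mod_cast hTm
      have hm' : (0:ℝ) < (m : ℝ) := by exact_mod_cast hm
      have h1m : 1 / (m:ℝ) ≤ ∑ a ∈ T, (w a)^2 := by
        rw [div_le_iff₀ hm']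
        nlinarith
      linarith
    · push_neg at hcl
      obtain ⟨a, ha, b, hb, hab, hnadj⟩ := hcl
      have hwa : w a ≠ 0 := (Finset.mem_filter.mp ha).2
      have hwb : w b ≠ 0 := (Finset.mem_filter.mp hb).2
      -- choose direction
      rcases le_total (∑ x, if G.Adj x a then w x else 0)
        (∑ x, if G.Adj x b then w x else 0) with hA | hA
      · obtain ⟨w', hw'0, hw'sum, hw'supp, hQ⟩ := MS_shift G w hw0 a b hab hnadj hA
        refine le_trans hQ (ih w' ?_ hw'0 (by rw [hw'sum, hsum]))
        have hsub : (univ.filter fun i => w' i ≠ 0) ⊆ T.erase a := by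
          intro k hk
          have hk' := (Finset.mem_filter.mp hk).2
          obtain ⟨h1, h2⟩ := hw'supp k hk'
          refine Finset.mem_erase.mpr ⟨h1, ?_⟩
          rcases h2 with h2 | rfl
          · exact Finset.mem_filter.mpr ⟨Finset.mem_univ k, h2⟩
          · exact hb
        calc (univ.filter fun i => w' i ≠ 0).card ≤ (T.erase a).card :=
              Finset.card_le_card hsub
          _ = T.card - 1 := Finset.card_erase_of_mem ha
          _ ≤ N := by omega
      · obtain ⟨w', hw'0, hw'sum, hw'supp, hQ⟩ := MS_shift G w hw0 b a hab.symm
          (fun h => hnadj h.symm) hA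
        refine le_trans hQ (ih w' ?_ hw'0 (by rw [hw'sum, hsum]))
        have hsub : (univ.filter fun i => w' i ≠ 0) ⊆ T.erase b := by
          intro k hk
          have hk' := (Finset.mem_filter.mp hk).2
          obtain ⟨h1, h2⟩ := hw'supp k hk'
          refine Finset.mem_erase.mpr ⟨h1, ?_⟩
          rcases h2 with h2 | rfl
          · exact Finset.mem_filter.mpr ⟨Finset.mem_univ k, h2⟩
          · exact ha
        calc (univ.filter fun i => w' i ≠ 0).card ≤ (T.erase b).card :=
              Finset.card_le_card hsub
          _ = T.card - 1 := Finset.card_erase_of_mem hb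
          _ ≤ N := by omega


end MSaux

/-- Motzkin–Straus: if the clique number of `G` is `m`, then the maximum over the
probability simplex of `Q(w) = Σ_{(i,j) : Adj} wᵢwⱼ` (ordered pairs) is `1 − 1/m`,
attained at uniform weights on a maximum clique. -/
theorem stmt_11 {n : ℕ} (G : SimpleGraph (Fin n)) [DecidableRel G.Adj]
    (m : ℕ) (s : Finset (Fin n)) (hs : G.IsNClique m s)
    (hmax : ∀ (k : ℕ) (t : Finset (Fin n)), G.IsNClique k t → k ≤ m)
    (hm : 1 ≤ m) :
    IsGreatest
      {q : ℝ | ∃ w : Fin n → ℝ, (∀ i, 0 ≤ w i) ∧ ∑ i, w i = 1 ∧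
        q = ∑ i, ∑ j, if G.Adj i j then w i * w j else 0}
      (1 - 1 / m) ∧
    (∑ i, ∑ j, if G.Adj i j then
        (if i ∈ s then (1 : ℝ) / m else 0) * (if j ∈ s then (1 : ℝ) / m else 0)
      else 0) = 1 - 1 / m := by
  classical
  have hm' : (0:ℝ) < (m:ℝ) := by exact_mod_cast hm
  set w₀ : Fin n → ℝ := fun i => if i ∈ s then (1:ℝ)/m else 0 with hw₀
  have hcard : s.card = m := hs.2
  have hw₀0 : ∀ i, 0 ≤ w₀ i := by
    intro i; by_cases h : i ∈ s <;> simp [hw₀, h]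
  have hw₀sum : ∑ i, w₀ i = 1 := by
    rw [hw₀]
    rw [Finset.sum_ite_mem, Finset.univ_inter, Finset.sum_const, hcard, nsmul_eq_mul]
    field_simp
  have hattain : MSQB G w₀ w₀ = 1 - 1/m := by
    have h1 : MSQB G w₀ w₀ = ∑ i ∈ s, ∑ j ∈ s, if G.Adj i j then w₀ i * w₀ j else 0 := by
      rw [MSQB]
      rw [← Finset.sum_subset (Finset.subset_univ s) (fun x _ hx => ?_)]
      · refine Finset.sum_congr rfl fun i _ => ?_
        rw [← Finset.sum_subset (Finset.subset_univ s) (fun x _ hx => ?_)]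
        simp [hw₀, hx]
      · refine Finset.sum_eq_zero fun b _ => ?_
        simp [hw₀, hx]
    rw [h1]
    have hterm : ∀ i ∈ s, (∑ j ∈ s, if G.Adj i j then w₀ i * w₀ j else 0) =
        (m:ℝ) * (1/m * (1/m)) - 1/m * (1/m) := by
      intro i hi
      have : ∀ j ∈ s, (if G.Adj i j then w₀ i * w₀ j else 0) =
          1/(m:ℝ) * (1/m) - (if j = i then 1/(m:ℝ) * (1/m) else 0) := by
        intro j hj
        by_cases hji : j = i
        · subst hji; simp [G.irrefl]
        · rw [if_neg hji, if_pos (hs.1 hi hj fun h => hji h.symm), hw₀]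
          simp [hi, hj]
      rw [Finset.sum_congr rfl this, Finset.sum_sub_distrib, Finset.sum_ite_eq' s i,
        if_pos hi, Finset.sum_const, hcard, nsmul_eq_mul]
    rw [Finset.sum_congr rfl hterm, Finset.sum_const, hcard, nsmul_eq_mul]
    field_simp
  refine ⟨⟨⟨w₀, hw₀0, hw₀sum, hattain.symm⟩, ?_⟩, hattain⟩
  rintro q ⟨w, hw0, hsum, rfl⟩
  exact MS_upper G m hm hmax _ w le_rfl hw0 hsum
end

section
/- Define ψ_*(t) = 1 if t = Δ and ψ_*(t) = 0 otherwise (Δ > 0 fixed), and for a probability measure ξ on X ⊆ ℝ^d define φ₁(ξ) = ∫∫ ψ_*(‖x − x'‖) dξ(x)dξ(x'). If X contains a regular d-dimensional simplex with edge length Δ, then the measure ξ* placing mass 1/(d+1) at each of its d+1 vertices satisfies φ₁(ξ*) = d/(d+1), and no probability measure on X achieves a larger value of φ₁. -/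
open MeasureTheory Finset
open scoped ENNReal

section Aux

lemma equidist_card {d : ℕ} {Δ : ℝ} (hΔ : 0 < Δ) (s : Finset (EuclideanSpace ℝ (Fin d)))
    (h : ∀ x ∈ s, ∀ y ∈ s, x ≠ y → dist x y = Δ) : s.card ≤ d + 1 := by
  rcases s.eq_empty_or_nonempty with rfl | ⟨p, hp⟩
  · simp
  classical
  set t := s.erase p with ht
  have htcard : t.card + 1 = s.card := Finset.card_erase_add_one hp
  suffices hle : t.card ≤ d by omega
  have hmem : ∀ x : ↥t, (x : EuclideanSpace ℝ (Fin d)) ∈ s ∧ (x : EuclideanSpace ℝ (Fin d)) ≠ p := by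
    rintro ⟨x, hx⟩
    exact ⟨Finset.mem_of_mem_erase hx, Finset.ne_of_mem_erase hx⟩
  set u : ↥t → EuclideanSpace ℝ (Fin d) := fun x => (x : EuclideanSpace ℝ (Fin d)) - p with hu
  have hinner : ∀ i j : ↥t, (inner ℝ (u i) (u j) : ℝ) = if i = j then Δ^2 else Δ^2/2 := by
    intro i j
    have hni : ‖u i‖ = Δ := by
      rw [hu]; rw [← dist_eq_norm]; exact h _ (hmem i).1 p hp (hmem i).2
    by_cases hij : i = j
    · subst hij
      rw [if_pos rfl, real_inner_self_eq_norm_sq, hni]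
    · have hnj : ‖u j‖ = Δ := by
        rw [hu]; rw [← dist_eq_norm]; exact h _ (hmem j).1 p hp (hmem j).2
      have hne : (i : EuclideanSpace ℝ (Fin d)) ≠ (j : EuclideanSpace ℝ (Fin d)) := by
        intro hc
        exact hij (Subtype.ext hc)
      have hnd : ‖u i - u j‖ = Δ := by
        have huij : u i - u j = (i : EuclideanSpace ℝ (Fin d)) - (j : EuclideanSpace ℝ (Fin d)) := by
          rw [hu]; simp only [sub_sub_sub_cancel_right]
        rw [huij, ← dist_eq_norm]
        exact h _ (hmem i).1 _ (hmem j).1 hne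
      have hpol := norm_sub_sq_real (u i) (u j)
      rw [hni, hnj, hnd] at hpol
      rw [if_neg hij]
      linarith
  have hli : LinearIndependent ℝ u := by
    rw [Fintype.linearIndependent_iff]
    intro g hg
    have inner_eval : ∀ i : ↥t, ∑ j, g i * g j * (Δ^2/2) = g i * (Δ^2/2) * ∑ j, g j := by
      intro i
      rw [Finset.mul_sum]
      exact Finset.sum_congr rfl fun j _ => by ring
    have step1 : ∀ i j : ↥t, g i * g j * (inner ℝ (u i) (u j) : ℝ)
        = g i * g j * (Δ^2/2) + (if i = j then g i * g j * (Δ^2/2) else 0) := by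
      intro i j; rw [hinner]; by_cases hij : i = j
      · simp [hij]; ring
      · simp [hij]
    have hzero : (0:ℝ) = ∑ i, ∑ j, g i * g j * (inner ℝ (u i) (u j) : ℝ) := by
      have h0 : (inner ℝ (∑ i, g i • u i) (∑ j, g j • u j) : ℝ) = 0 := by rw [hg]; simp
      rw [sum_inner] at h0
      simp_rw [inner_sum, real_inner_smul_left, real_inner_smul_right] at h0
      rw [← h0]
      exact (Finset.sum_congr rfl fun i _ => Finset.sum_congr rfl fun j _ => by ring).symm
    have hsplit : ∑ i, ∑ j, g i * g j * (inner ℝ (u i) (u j) : ℝ)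
        = Δ^2/2 * ((∑ i, g i)^2 + ∑ i, (g i)^2) := by
      calc ∑ i, ∑ j, g i * g j * (inner ℝ (u i) (u j) : ℝ)
          = ∑ i, (∑ j, g i * g j * (Δ^2/2) + ∑ j, (if i = j then g i * g j * (Δ^2/2) else 0)) := by
            simp_rw [step1, Finset.sum_add_distrib]
        _ = ∑ i, (g i * (Δ^2/2) * ∑ j, g j + g i * g i * (Δ^2/2)) := by
            refine Finset.sum_congr rfl fun i _ => ?_
            rw [inner_eval i, Finset.sum_ite_eq, if_pos (Finset.mem_univ i)]
        _ = (∑ i, g i) * (∑ j, g j) * (Δ^2/2) + (∑ i, g i * g i) * (Δ^2/2) := by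
            rw [Finset.sum_add_distrib]
            congr 1
            · rw [Finset.sum_mul, Finset.sum_mul]
              exact Finset.sum_congr rfl fun i _ => by ring
            · rw [Finset.sum_mul]
        _ = Δ^2/2 * ((∑ i, g i)^2 + ∑ i, (g i)^2) := by
            simp_rw [sq]
            ring
    rw [hsplit] at hzero
    have hΔ2 : (0:ℝ) < Δ^2/2 := by positivity
    intro i
    have h2 : 0 ≤ ∑ j, (g j)^2 := Finset.sum_nonneg fun j _ => sq_nonneg _
    have h3 : ∑ j, (g j)^2 = 0 := by nlinarith [sq_nonneg (∑ j, g j)]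
    have h4 : (g i)^2 ≤ 0 := h3 ▸ Finset.single_le_sum (fun j _ => sq_nonneg (g j)) (Finset.mem_univ i)
    nlinarith [sq_nonneg (g i)]
  have hfin := hli.fintype_card_le_finrank
  rwa [finrank_euclideanSpace_fin, Fintype.card_coe] at hfin

lemma turan_ordered {V : Type*} [DecidableEq V] (R : V → V → Prop) [DecidableRel R]
    (hsymm : ∀ i j, R i j → R j i) (r : ℕ) :
    ∀ s : Finset V,
      (∀ t ⊆ s, (∀ i ∈ t, ∀ j ∈ t, i ≠ j → R i j) → t.card ≤ r) →
      r * ((s ×ˢ s).filter (fun p => p.1 ≠ p.2 ∧ R p.1 p.2)).card ≤ (r - 1) * s.card ^ 2 := by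
  induction r with
  | zero => intro s hs; simp
  | succ r IH =>
    intro s
    induction s using Finset.strongInduction with
    | _ s ih =>
      intro hs
      rw [Nat.add_sub_cancel]
      by_cases hC : ∃ C ⊆ s, C.card = r + 1 ∧ ∀ i ∈ C, ∀ j ∈ C, i ≠ j → R i j
      · obtain ⟨C, hCs, hCcard, hCcl⟩ := hC
        set t := s \ C with htdef
        have hCne : C.Nonempty := Finset.card_pos.mp (by omega)
        have hts : t ⊂ s := Finset.sdiff_ssubset hCs hCne
        have hcard : t.card + (r + 1) = s.card := by
          rw [← hCcard]; exact Finset.card_sdiff_add_card_eq_card hCs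
        -- degree bounds
        have hdeg : ∀ x ∈ t, (C.filter (fun c => R c x)).card ≤ r := by
          intro x hx
          by_contra hcon
          push_neg at hcon
          have hsub : C.filter (fun c => R c x) ⊆ C := Finset.filter_subset _ _
          have heq : C.filter (fun c => R c x) = C :=
            Finset.eq_of_subset_of_card_le hsub (by omega)
          have hall : ∀ c ∈ C, R c x := by
            intro c hc
            rw [← heq] at hc
            exact (Finset.mem_filter.mp hc).2
          have hxC : x ∉ C := (Finset.mem_sdiff.mp hx).2
          have hxs : x ∈ s := (Finset.mem_sdiff.mp hx).1
          have hclique : ∀ i ∈ insert x C, ∀ j ∈ insert x C, i ≠ j → R i j := by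
            intro i hi j hj hij
            rcases Finset.mem_insert.mp hi with rfl | hiC
            · rcases Finset.mem_insert.mp hj with rfl | hjC
              · exact absurd rfl hij
              · exact hsymm _ _ (hall j hjC)
            · rcases Finset.mem_insert.mp hj with rfl | hjC
              · exact hall i hiC
              · exact hCcl i hiC j hjC hij
          have := hs (insert x C) (Finset.insert_subset hxs hCs) hclique
          rw [Finset.card_insert_of_notMem hxC, hCcard] at this
          omega
        have hdeg' : ∀ x ∈ t, (C.filter (fun c => R x c)).card ≤ r := by
          intro x hx
          refine le_trans (Finset.card_le_card ?_) (hdeg x hx)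
          exact Finset.monotone_filter_right C (fun c _ hc => hsymm _ _ hc)
        -- decomposition of the edge count
        have hprod : s ×ˢ s = ((C ×ˢ C) ∪ (C ×ˢ t)) ∪ ((t ×ˢ C) ∪ (t ×ˢ t)) := by
          have hsu : s = C ∪ t := by
            rw [htdef, Finset.union_sdiff_of_subset hCs]
          rw [hsu, Finset.union_product, Finset.product_union, Finset.product_union]
        have hsplit : ((s ×ˢ s).filter (fun p => p.1 ≠ p.2 ∧ R p.1 p.2)).card ≤
            ((C ×ˢ C).filter (fun p => p.1 ≠ p.2 ∧ R p.1 p.2)).card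
            + ((C ×ˢ t).filter (fun p => p.1 ≠ p.2 ∧ R p.1 p.2)).card
            + (((t ×ˢ C).filter (fun p => p.1 ≠ p.2 ∧ R p.1 p.2)).card
            + ((t ×ˢ t).filter (fun p => p.1 ≠ p.2 ∧ R p.1 p.2)).card) := by
          rw [hprod, Finset.filter_union, Finset.filter_union, Finset.filter_union]
          refine (Finset.card_union_le _ _).trans ?_
          exact add_le_add (Finset.card_union_le _ _) (Finset.card_union_le _ _)
        have e1 : ((C ×ˢ C).filter (fun p => p.1 ≠ p.2 ∧ R p.1 p.2)).card ≤ (r + 1) * r := by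
          have hsub : (C ×ˢ C).filter (fun p => p.1 ≠ p.2 ∧ R p.1 p.2) ⊆ C.offDiag := by
            rintro ⟨a, b⟩ hab
            obtain ⟨hmem, hne, _⟩ := Finset.mem_filter.mp hab
            exact Finset.mem_offDiag.mpr
              ⟨(Finset.mem_product.mp hmem).1, (Finset.mem_product.mp hmem).2, hne⟩
          refine (Finset.card_le_card hsub).trans ?_
          rw [Finset.offDiag_card, hCcard, Nat.mul_succ, Nat.add_sub_cancel]
        have e2 : ((C ×ˢ t).filter (fun p => p.1 ≠ p.2 ∧ R p.1 p.2)).card ≤ t.card * r := by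
          have hsub : (C ×ˢ t).filter (fun p => p.1 ≠ p.2 ∧ R p.1 p.2) ⊆
              t.biUnion (fun x => (C.filter (fun c => R c x)).image (fun c => (c, x))) := by
            rintro ⟨a, b⟩ hab
            obtain ⟨hmem, hne, hR⟩ := Finset.mem_filter.mp hab
            refine Finset.mem_biUnion.mpr ⟨b, (Finset.mem_product.mp hmem).2, ?_⟩
            exact Finset.mem_image.mpr
              ⟨a, Finset.mem_filter.mpr ⟨(Finset.mem_product.mp hmem).1, hR⟩, rfl⟩
          refine (Finset.card_le_card hsub).trans ((Finset.card_biUnion_le).trans ?_)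
          calc ∑ x ∈ t, ((C.filter (fun c => R c x)).image (fun c => (c, x))).card
              ≤ ∑ _x ∈ t, r :=
                Finset.sum_le_sum fun x hx => (Finset.card_image_le).trans (hdeg x hx)
            _ = t.card * r := by rw [Finset.sum_const, smul_eq_mul]
        have e3 : ((t ×ˢ C).filter (fun p => p.1 ≠ p.2 ∧ R p.1 p.2)).card ≤ t.card * r := by
          have hsub : (t ×ˢ C).filter (fun p => p.1 ≠ p.2 ∧ R p.1 p.2) ⊆
              t.biUnion (fun x => (C.filter (fun c => R x c)).image (fun c => (x, c))) := by
            rintro ⟨a, b⟩ hab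
            obtain ⟨hmem, hne, hR⟩ := Finset.mem_filter.mp hab
            refine Finset.mem_biUnion.mpr ⟨a, (Finset.mem_product.mp hmem).1, ?_⟩
            exact Finset.mem_image.mpr
              ⟨b, Finset.mem_filter.mpr ⟨(Finset.mem_product.mp hmem).2, hR⟩, rfl⟩
          refine (Finset.card_le_card hsub).trans ((Finset.card_biUnion_le).trans ?_)
          calc ∑ x ∈ t, ((C.filter (fun c => R x c)).image (fun c => (x, c))).card
              ≤ ∑ _x ∈ t, r :=
                Finset.sum_le_sum fun x hx => (Finset.card_image_le).trans (hdeg' x hx)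
            _ = t.card * r := by rw [Finset.sum_const, smul_eq_mul]
        have hIH := ih t hts (fun u hu hcl => hs u (hu.trans Finset.sdiff_subset) hcl)
        rw [Nat.add_sub_cancel] at hIH
        have hEs' : ((s ×ˢ s).filter (fun p => p.1 ≠ p.2 ∧ R p.1 p.2)).card ≤
            (r + 1) * r + t.card * r + (t.card * r
              + ((t ×ˢ t).filter (fun p => p.1 ≠ p.2 ∧ R p.1 p.2)).card) :=
          hsplit.trans (add_le_add (add_le_add e1 e2) (add_le_add e3 le_rfl))
        have hscard : s.card = t.card + (r + 1) := hcard.symm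
        rw [hscard]
        calc (r + 1) * ((s ×ˢ s).filter (fun p => p.1 ≠ p.2 ∧ R p.1 p.2)).card
            ≤ (r + 1) * ((r + 1) * r + t.card * r + (t.card * r
              + ((t ×ˢ t).filter (fun p => p.1 ≠ p.2 ∧ R p.1 p.2)).card)) :=
              Nat.mul_le_mul_left _ hEs'
          _ = (r + 1) * ((r + 1) * r + t.card * r + t.card * r)
              + (r + 1) * ((t ×ˢ t).filter (fun p => p.1 ≠ p.2 ∧ R p.1 p.2)).card := by ring
          _ ≤ (r + 1) * ((r + 1) * r + t.card * r + t.card * r) + r * t.card ^ 2 :=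
              Nat.add_le_add_left hIH _
          _ = r * (t.card + (r + 1)) ^ 2 := by ring
      · push_neg at hC
        have hs' : ∀ t ⊆ s, (∀ i ∈ t, ∀ j ∈ t, i ≠ j → R i j) → t.card ≤ r := by
          intro t ht hcl
          by_contra hcon
          push_neg at hcon
          obtain ⟨u, hu, hucard⟩ := Finset.exists_subset_card_eq (hcon : r + 1 ≤ t.card)
          obtain ⟨i, hi, j, hj, hij, hnR⟩ := hC u (hu.trans ht) hucard
          exact hnR (hcl i (hu hi) j (hu hj) hij)
        have hr := IH s hs'
        have hE : ((s ×ˢ s).filter (fun p => p.1 ≠ p.2 ∧ R p.1 p.2)).card ≤ s.card ^ 2 := by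
          refine le_trans (Finset.card_le_card (Finset.filter_subset _ _)) ?_
          rw [Finset.card_product, sq]
        rcases Nat.eq_zero_or_pos r with rfl | hrpos
        · have hempty : ((s ×ˢ s).filter (fun p => p.1 ≠ p.2 ∧ R p.1 p.2)) = ∅ := by
            rw [Finset.eq_empty_iff_forall_notMem]
            rintro ⟨a, b⟩ hab
            obtain ⟨hmem, hne, hR⟩ := Finset.mem_filter.mp hab
            have has : a ∈ s := (Finset.mem_product.mp hmem).1
            have hbs : b ∈ s := (Finset.mem_product.mp hmem).2
            have hcl : ∀ i ∈ ({a, b} : Finset V), ∀ j ∈ ({a, b} : Finset V), i ≠ j → R i j := by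
              intro i hi j hj hij
              rcases Finset.mem_insert.mp hi with rfl | hi' <;>
                rcases Finset.mem_insert.mp hj with rfl | hj'
              · exact absurd rfl hij
              · rw [Finset.mem_singleton.mp hj']; exact hR
              · rw [Finset.mem_singleton.mp hi']; exact hsymm _ _ hR
              · rw [Finset.mem_singleton.mp hi', Finset.mem_singleton.mp hj'] at hij
                exact absurd rfl hij
            have := hs {a, b} (Finset.insert_subset has (Finset.singleton_subset_iff.mpr hbs)) hcl
            rw [Finset.card_insert_of_notMem (by simpa using hne), Finset.card_singleton] at this
            omega
          rw [hempty]
          simp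
        · obtain ⟨r', rfl⟩ := Nat.exists_eq_succ_of_ne_zero (Nat.pos_iff_ne_zero.mp hrpos)
          have h1 : (r' + 1 - 1) * s.card ^ 2 + s.card ^ 2 = (r' + 1) * s.card ^ 2 := by
            rw [Nat.add_sub_cancel]; ring
          calc (r' + 1 + 1) * ((s ×ˢ s).filter (fun p => p.1 ≠ p.2 ∧ R p.1 p.2)).card
              = (r' + 1) * ((s ×ˢ s).filter (fun p => p.1 ≠ p.2 ∧ R p.1 p.2)).card
                + ((s ×ˢ s).filter (fun p => p.1 ≠ p.2 ∧ R p.1 p.2)).card := by ring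
            _ ≤ (r' + 1 - 1) * s.card ^ 2 + s.card ^ 2 := add_le_add hr hE
            _ = (r' + 1) * s.card ^ 2 := h1

lemma pair_marginal (ξ : Measure (EuclideanSpace ℝ (Fin d))) [IsProbabilityMeasure ξ]
    {k : ℕ} {i j : Fin k} (hij : i ≠ j) :
    Measure.map (fun f : Fin k → EuclideanSpace ℝ (Fin d) => (f i, f j))
      (Measure.pi fun _ => ξ) = ξ.prod ξ := by
  have hmeas : Measurable (fun f : Fin k → EuclideanSpace ℝ (Fin d) => (f i, f j)) :=
    (measurable_pi_apply i).prodMk (measurable_pi_apply j)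
  refine (Measure.prod_eq fun s t hs ht => ?_).symm
  rw [Measure.map_apply hmeas (hs.prod ht)]
  classical
  have hpre : (fun f : Fin k → EuclideanSpace ℝ (Fin d) => (f i, f j)) ⁻¹' (s ×ˢ t)
      = Set.pi Set.univ (fun l => if l = i then s else if l = j then t else Set.univ) := by
    ext f
    simp only [Set.mem_preimage, Set.mem_prod, Set.mem_pi, Set.mem_univ, true_implies]
    constructor
    · rintro ⟨h1, h2⟩ l
      by_cases hl : l = i
      · subst hl; rw [if_pos rfl]; exact h1
      · by_cases hl2 : l = j
        · subst hl2; rw [if_neg hl, if_pos rfl]; exact h2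
        · rw [if_neg hl, if_neg hl2]; trivial
    · intro h
      constructor
      · have := h i; rwa [if_pos rfl] at this
      · have := h j; rwa [if_neg (fun hc => hij hc.symm), if_pos rfl] at this
  rw [hpre, Measure.pi_pi]
  have h1 : ∀ l ∈ (Finset.univ : Finset (Fin k)), l ∉ ({i, j} : Finset (Fin k)) →
      ξ (if l = i then s else if l = j then t else Set.univ) = 1 := by
    intro l _ hl
    simp only [Finset.mem_insert, Finset.mem_singleton, not_or] at hl
    rw [if_neg hl.1, if_neg hl.2, measure_univ]
  rw [← Finset.prod_subset (Finset.subset_univ ({i, j} : Finset (Fin k))) h1,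
    Finset.prod_pair hij, if_pos rfl, if_neg (fun hc => hij hc.symm), if_pos rfl]

lemma key_bound (Δ : ℝ) (hΔ : 0 < Δ) (ξ : Measure (EuclideanSpace ℝ (Fin d)))
    [IsProbabilityMeasure ξ] (k : ℕ) :
    ((d : ℝ≥0∞) + 1) * (((k * k - k : ℕ) : ℝ≥0∞) * ξ.prod ξ {p | dist p.1 p.2 = Δ})
      ≤ (d : ℝ≥0∞) * ((k * k : ℕ) : ℝ≥0∞) := by
  classical
  set E : Set (EuclideanSpace ℝ (Fin d) × EuclideanSpace ℝ (Fin d)) := {p | dist p.1 p.2 = Δ}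
    with hEdef
  have hE : MeasurableSet E :=
    (continuous_fst.dist continuous_snd).measurable (measurableSet_singleton Δ)
  set μ : Measure (Fin k → EuclideanSpace ℝ (Fin d)) := Measure.pi (fun _ => ξ) with hμ
  haveI : IsProbabilityMeasure μ := by rw [hμ]; infer_instance
  set P : Finset (Fin k × Fin k) := Finset.univ.offDiag with hP
  have hmeasp : ∀ p : Fin k × Fin k,
      Measurable (fun f : Fin k → EuclideanSpace ℝ (Fin d) => (f p.1, f p.2)) :=
    fun p => (measurable_pi_apply p.1).prodMk (measurable_pi_apply p.2)
  have hsp : ∀ p : Fin k × Fin k,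
      MeasurableSet ((fun f : Fin k → EuclideanSpace ℝ (Fin d) => (f p.1, f p.2)) ⁻¹' E) :=
    fun p => (hmeasp p) hE
  have hμsp : ∀ p ∈ P, μ ((fun f : Fin k → EuclideanSpace ℝ (Fin d) => (f p.1, f p.2)) ⁻¹' E)
      = ξ.prod ξ E := by
    intro p hp
    have hne : p.1 ≠ p.2 := (Finset.mem_offDiag.mp hp).2.2
    rw [← pair_marginal ξ hne, Measure.map_apply (hmeasp p) hE]
  have hsum : ∑ p ∈ P, μ ((fun f : Fin k → EuclideanSpace ℝ (Fin d) => (f p.1, f p.2)) ⁻¹' E)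
      = ((k * k - k : ℕ) : ℝ≥0∞) * ξ.prod ξ E := by
    rw [Finset.sum_congr rfl hμsp, Finset.sum_const, hP, Finset.offDiag_card,
      Finset.card_univ, Fintype.card_fin, nsmul_eq_mul]
  have hlint : ∑ p ∈ P, μ ((fun f : Fin k → EuclideanSpace ℝ (Fin d) => (f p.1, f p.2)) ⁻¹' E)
      = ∫⁻ f, ∑ p ∈ P, ((fun f : Fin k → EuclideanSpace ℝ (Fin d) => (f p.1, f p.2)) ⁻¹' E).indicator
          (fun _ => (1 : ℝ≥0∞)) f ∂μ := by
    exact (Finset.sum_congr rfl fun p _ => (lintegral_indicator_one (hsp p)).symm).trans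
      (lintegral_finset_sum _ (fun p _ => (measurable_one.indicator (hsp p)))).symm
  have hpoint : ∀ f : Fin k → EuclideanSpace ℝ (Fin d),
      ((d : ℝ≥0∞) + 1) * (∑ p ∈ P, ((fun f : Fin k → EuclideanSpace ℝ (Fin d) =>
          (f p.1, f p.2)) ⁻¹' E).indicator (fun _ => (1 : ℝ≥0∞)) f)
        ≤ (d : ℝ≥0∞) * ((k * k : ℕ) : ℝ≥0∞) := by
    intro f
    have hsum2 : (∑ p ∈ P, ((fun f : Fin k → EuclideanSpace ℝ (Fin d) =>
          (f p.1, f p.2)) ⁻¹' E).indicator (fun _ => (1 : ℝ≥0∞)) f)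
        = ((((Finset.univ ×ˢ Finset.univ).filter
            (fun p : Fin k × Fin k => p.1 ≠ p.2 ∧ dist (f p.1) (f p.2) = Δ)).card : ℕ) : ℝ≥0∞) := by
      have hterm : ∀ p ∈ P, ((fun f : Fin k → EuclideanSpace ℝ (Fin d) =>
          (f p.1, f p.2)) ⁻¹' E).indicator (fun _ => (1 : ℝ≥0∞)) f
          = if dist (f p.1) (f p.2) = Δ then 1 else 0 := by
        intro p _
        rw [Set.indicator_apply]
        rfl
      rw [Finset.sum_congr rfl hterm, Finset.sum_boole]
      congr 2
      ext p
      simp only [hP, Finset.mem_filter, Finset.mem_offDiag, Finset.mem_product, Finset.mem_univ,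
        true_and, and_assoc]
    rw [hsum2]
    have hclique : ∀ t ⊆ (Finset.univ : Finset (Fin k)),
        (∀ a ∈ t, ∀ b ∈ t, a ≠ b → dist (f a) (f b) = Δ) → t.card ≤ d + 1 := by
      intro t _ hcl
      have hinj : Set.InjOn f t := by
        intro a ha b hb hab
        by_contra hne
        have hd := hcl a ha b hb hne
        rw [hab, dist_self] at hd
        exact hΔ.ne hd
      have hcard : (t.image f).card = t.card := Finset.card_image_of_injOn hinj
      rw [← hcard]
      refine equidist_card hΔ (t.image f) ?_
      intro x hx y hy hxy
      obtain ⟨a, ha, rfl⟩ := Finset.mem_image.mp hx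
      obtain ⟨b, hb, rfl⟩ := Finset.mem_image.mp hy
      exact hcl a ha b hb (fun hc => hxy (by rw [hc]))
    have htur := turan_ordered (fun a b => dist (f a) (f b) = Δ)
        (fun a b h => (dist_comm (f b) (f a)).trans h) (d + 1) Finset.univ hclique
    rw [Nat.add_sub_cancel, Finset.card_univ, Fintype.card_fin] at htur
    calc ((d : ℝ≥0∞) + 1) * ((((Finset.univ ×ˢ Finset.univ).filter
            (fun p : Fin k × Fin k => p.1 ≠ p.2 ∧ dist (f p.1) (f p.2) = Δ)).card : ℕ) : ℝ≥0∞)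
        = (((d + 1) * ((Finset.univ ×ˢ Finset.univ).filter
            (fun p : Fin k × Fin k => p.1 ≠ p.2 ∧ dist (f p.1) (f p.2) = Δ)).card : ℕ) : ℝ≥0∞) := by
          push_cast; ring
      _ ≤ ((d * k ^ 2 : ℕ) : ℝ≥0∞) := Nat.cast_le.mpr htur
      _ = (d : ℝ≥0∞) * ((k * k : ℕ) : ℝ≥0∞) := by push_cast; ring
  have hgm : Measurable (fun f : Fin k → EuclideanSpace ℝ (Fin d) =>
      ∑ p ∈ P, ((fun f : Fin k → EuclideanSpace ℝ (Fin d) =>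
        (f p.1, f p.2)) ⁻¹' E).indicator (fun _ => (1 : ℝ≥0∞)) f) :=
    Finset.measurable_sum _ (fun p _ => measurable_one.indicator (hsp p))
  calc ((d : ℝ≥0∞) + 1) * (((k * k - k : ℕ) : ℝ≥0∞) * ξ.prod ξ E)
      = ((d : ℝ≥0∞) + 1) * ∫⁻ f, ∑ p ∈ P, ((fun f : Fin k → EuclideanSpace ℝ (Fin d) =>
          (f p.1, f p.2)) ⁻¹' E).indicator (fun _ => (1 : ℝ≥0∞)) f ∂μ := by
        rw [← hlint, hsum]
    _ = ∫⁻ f, ((d : ℝ≥0∞) + 1) * ∑ p ∈ P, ((fun f : Fin k → EuclideanSpace ℝ (Fin d) =>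
          (f p.1, f p.2)) ⁻¹' E).indicator (fun _ => (1 : ℝ≥0∞)) f ∂μ :=
        (lintegral_const_mul _ hgm).symm
    _ ≤ ∫⁻ _f, (d : ℝ≥0∞) * ((k * k : ℕ) : ℝ≥0∞) ∂μ := lintegral_mono hpoint
    _ = (d : ℝ≥0∞) * ((k * k : ℕ) : ℝ≥0∞) := by rw [lintegral_const, measure_univ, mul_one]

end Aux

/-- With `ψ_*(t) = 1_{t = Δ}` and `φ₁(ξ) = ∫∫ ψ_*(‖x−x'‖) dξ dξ`: if `X ⊆ ℝ^d`
contains the vertices of a regular `d`-simplex with edge length `Δ`, the uniform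
measure `ξ*` on these `d+1` vertices satisfies `φ₁(ξ*) = d/(d+1)` and no probability
measure on `X` does better. -/
theorem stmt_13 (d : ℕ) (Δ : ℝ) (hΔ : 0 < Δ)
    (X : Set (EuclideanSpace ℝ (Fin d)))
    (v : Fin (d + 1) → EuclideanSpace ℝ (Fin d))
    (hdist : ∀ i j, i ≠ j → dist (v i) (v j) = Δ)
    (hvX : ∀ i, v i ∈ X)
    (ψstar : ℝ → ℝ) (hψ : ψstar = fun t => if t = Δ then (1 : ℝ) else 0)
    (φ : Measure (EuclideanSpace ℝ (Fin d)) → ℝ)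
    (hφ : φ = fun m => ∫ x, ∫ x', ψstar (dist x x') ∂m ∂m)
    (ξstar : Measure (EuclideanSpace ℝ (Fin d)))
    (hξstar : ξstar = ∑ i, ((d : ENNReal) + 1)⁻¹ • Measure.dirac (v i)) :
    φ ξstar = (d : ℝ) / (d + 1) ∧
      ∀ ξ : Measure (EuclideanSpace ℝ (Fin d)), IsProbabilityMeasure ξ →
        ξ Xᶜ = 0 → φ ξ ≤ (d : ℝ) / (d + 1) := by
  constructor
  · -- value at the uniform measure on the simplex vertices
      set cR : ℝ := ((d : ℝ) + 1)⁻¹ with hcR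
      have hd1 : (0:ℝ) < (d:ℝ) + 1 := by positivity
      have hcth : ((d : ENNReal) + 1)⁻¹.toReal = cR := by
        rw [hcR, ENNReal.toReal_inv]
        congr 1
      have hcnt : ((d : ENNReal) + 1)⁻¹ ≠ ⊤ := by
        rw [ENNReal.inv_ne_top]
        simp
      have hψm : ∀ y : EuclideanSpace ℝ (Fin d), Measurable (fun x' => ψstar (dist y x')) := by
        intro y
        rw [hψ]
        have hm : Measurable (fun x' : EuclideanSpace ℝ (Fin d) => dist y x') :=
          (Continuous.dist continuous_const continuous_id).measurable
        exact Measurable.ite (hm (measurableSet_singleton Δ)) measurable_const measurable_const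
      have hψm' : ∀ y : EuclideanSpace ℝ (Fin d), Measurable (fun x => ψstar (dist x y)) := by
        intro y
        rw [hψ]
        have hm : Measurable (fun x : EuclideanSpace ℝ (Fin d) => dist x y) :=
          (Continuous.dist continuous_id continuous_const).measurable
        exact Measurable.ite (hm (measurableSet_singleton Δ)) measurable_const measurable_const
      have hψb : ∀ t : ℝ, ‖ψstar t‖ ≤ 1 := by
        intro t
        rw [hψ]
        dsimp only
        split_ifs <;> simp
      have hint : ∀ h : EuclideanSpace ℝ (Fin d) → ℝ, Measurable h → (∀ x, ‖h x‖ ≤ 1) →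
          ∫ x, h x ∂ξstar = ∑ i, cR * h (v i) := by
        intro h hm hb
        rw [hξstar, integral_finset_sum_measure (fun i _ => ?_)]
        · refine Finset.sum_congr rfl fun i _ => ?_
          rw [integral_smul_measure, integral_dirac' _ _ hm.stronglyMeasurable, hcth, smul_eq_mul]
        · refine Integrable.smul_measure ?_ hcnt
          exact Integrable.mono' (integrable_const 1) hm.aestronglyMeasurable (ae_of_all _ hb)
      have hinner : ∀ x : EuclideanSpace ℝ (Fin d),
          ∫ x', ψstar (dist x x') ∂ξstar = ∑ j, cR * ψstar (dist x (v j)) :=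
        fun x => hint _ (hψm x) (fun x' => hψb _)
      have hcRpos : 0 < cR := by rw [hcR]; positivity
      have houter : φ ξstar = ∑ i, cR * (∑ j, cR * ψstar (dist (v i) (v j))) := by
        rw [hφ]
        dsimp only
        rw [integral_congr_ae (ae_of_all _ hinner)]
        refine hint _ ?_ ?_
        · exact Finset.measurable_sum _ fun j _ => (hψm' (v j)).const_mul cR
        · intro x
          refine (norm_sum_le _ _).trans ?_
          have : ∀ j : Fin (d+1), ‖cR * ψstar (dist x (v j))‖ ≤ cR := by
            intro j
            rw [norm_mul]
            calc ‖cR‖ * ‖ψstar (dist x (v j))‖ ≤ ‖cR‖ * 1 := by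
                  exact mul_le_mul_of_nonneg_left (hψb _) (norm_nonneg _)
              _ = cR := by rw [mul_one, Real.norm_eq_abs, abs_of_pos hcRpos]
          refine (Finset.sum_le_sum fun j _ => this j).trans ?_
          rw [Finset.sum_const, Finset.card_univ, Fintype.card_fin, nsmul_eq_mul]
          refine le_of_eq ?_
          rw [hcR]
          push_cast
          field_simp
      rw [houter]
      have hterm : ∀ i j : Fin (d+1), ψstar (dist (v i) (v j)) = if j = i then 0 else 1 := by
        intro i j
        by_cases hij : j = i
        · subst hij
          simp [hψ, dist_self, hΔ.ne']
          exact fun h => absurd h.symm hΔ.ne'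
        · rw [hdist i j (fun h => hij (h ▸ rfl))]
          simp [hψ, hij]

      have hin : ∀ i, (∑ j, cR * ψstar (dist (v i) (v j))) = (d:ℝ) * cR := by
        intro i
        calc ∑ j, cR * ψstar (dist (v i) (v j))
            = ∑ j, (cR - if j = i then cR else 0) := by
              refine Finset.sum_congr rfl fun j _ => ?_
              rw [hterm i j]
              by_cases hij : j = i
              · simp [hij]
              · simp [hij]
          _ = (d:ℝ) * cR := by
              rw [Finset.sum_sub_distrib, Finset.sum_ite_eq' Finset.univ i (fun _ => cR)]
              rw [Finset.sum_const, Finset.card_univ, Fintype.card_fin, if_pos (Finset.mem_univ i),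
                nsmul_eq_mul]
              push_cast
              ring
      simp_rw [hin]
      rw [Finset.sum_const, Finset.card_univ, Fintype.card_fin, nsmul_eq_mul, hcR]
      push_cast
      field_simp
  · intro ξ hprob _hX
    haveI := hprob
    classical
    set E : Set (EuclideanSpace ℝ (Fin d) × EuclideanSpace ℝ (Fin d)) := {p | dist p.1 p.2 = Δ}
      with hEdef
    have hE : MeasurableSet E :=
      (continuous_fst.dist continuous_snd).measurable (measurableSet_singleton Δ)
    set a : ℝ := (ξ.prod ξ E).toReal with hadef
    have hd1 : (0:ℝ) < (d:ℝ) + 1 := by positivity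
    -- step A : φ ξ = a
    have hsec : ∀ x : EuclideanSpace ℝ (Fin d), MeasurableSet (Prod.mk x ⁻¹' E) :=
      fun x => measurable_prodMk_left hE
    have hinner2 : ∀ x : EuclideanSpace ℝ (Fin d),
        ∫ x', ψstar (dist x x') ∂ξ = (ξ (Prod.mk x ⁻¹' E)).toReal := by
      intro x
      have hrep : (fun x' => ψstar (dist x x'))
          = Set.indicator (Prod.mk x ⁻¹' E) (fun _ => (1:ℝ)) := by
        funext x'
        simp only [hψ, Set.indicator_apply]
        by_cases h : dist x x' = Δ
        · rw [if_pos h, if_pos (show x' ∈ Prod.mk x ⁻¹' E from h)]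
        · rw [if_neg h, if_neg (show ¬(x' ∈ Prod.mk x ⁻¹' E) from fun hc => h hc)]
      rw [hrep, integral_indicator_const (1:ℝ) (hsec x), smul_eq_mul, mul_one, Measure.real]
    have hφa : φ ξ = a := by
      rw [hφ]
      dsimp only
      rw [integral_congr_ae (ae_of_all _ hinner2),
        integral_toReal (measurable_measure_prodMk_left hE).aemeasurable
          (ae_of_all _ fun x => measure_lt_top ξ _),
        ← Measure.prod_apply hE]
    -- real form of key bound
    have hreal : ∀ k : ℕ, ((d:ℝ)+1) * (((k*k-k : ℕ):ℝ) * a) ≤ (d:ℝ) * ((k*k : ℕ):ℝ) := by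
      intro k
      have hrhs : (d:ℝ≥0∞) * ((k*k:ℕ):ℝ≥0∞) ≠ ⊤ :=
        ENNReal.mul_ne_top (ENNReal.natCast_ne_top d) (ENNReal.natCast_ne_top _)
      have hcast : ((d:ℝ≥0∞)+1) = ((d+1:ℕ):ℝ≥0∞) := by push_cast; ring
      have h2 := ENNReal.toReal_mono hrhs (key_bound Δ hΔ ξ k)
      rw [hcast] at h2
      simp only [ENNReal.toReal_mul, ENNReal.toReal_natCast] at h2
      calc ((d:ℝ)+1) * (((k*k-k : ℕ):ℝ) * a) = ((d+1:ℕ):ℝ) * (((k*k-k : ℕ):ℝ) * a) := by push_cast; ring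
        _ ≤ (d:ℝ) * ((k*k : ℕ):ℝ) := h2
    -- conclude a ≤ d/(d+1)
    have hkey : a ≤ (d:ℝ)/((d:ℝ)+1) := by
      by_contra hcon
      push_neg at hcon
      have hb : 0 < a * ((d:ℝ)+1) - d := by
        rw [div_lt_iff₀ hd1] at hcon
        linarith
      obtain ⟨k, hk2, hkd⟩ : ∃ k : ℕ, (2:ℝ) ≤ (k:ℝ) ∧
          (d:ℝ)/(a * ((d:ℝ)+1) - (d:ℝ)) < (k:ℝ) - 1 := by
        refine ⟨⌈(d:ℝ)/(a * ((d:ℝ)+1) - (d:ℝ))⌉₊ + 2, ?_, ?_⟩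
        · push_cast
          linarith [Nat.cast_nonneg (α := ℝ) ⌈(d:ℝ)/(a * ((d:ℝ)+1) - (d:ℝ))⌉₊]
        · have hce := Nat.le_ceil ((d:ℝ)/(a * ((d:ℝ)+1) - (d:ℝ)))
          push_cast
          linarith
      have hgt : (d:ℝ) < (a * ((d:ℝ)+1) - (d:ℝ)) * ((k:ℝ)-1) := by
        rw [div_lt_iff₀ hb] at hkd
        nlinarith [hkd]
      have hkpos : 0 < k := by
        rcases Nat.eq_zero_or_pos k with rfl | h
        · norm_num at hk2
        · exact h
      have hkk : k ≤ k * k := Nat.le_mul_of_pos_left k hkpos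
      have hcast2 : ((k*k-k : ℕ):ℝ) = (k:ℝ)*(k:ℝ) - (k:ℝ) := by
        rw [Nat.cast_sub hkk]; push_cast; ring
      have h := hreal k
      rw [hcast2] at h
      push_cast at h
      have hKpos : (0:ℝ) < (k:ℝ) := by linarith
      nlinarith [mul_pos hKpos (sub_pos.mpr hgt), h]
    rw [hφa]
    exact hkey
end

section
/- Let ψ : ℝ₊ → [0,1] attain its maximum value 1 uniquely at Δ with ψ(0) = 0, let x_1,...,x_{d+1} ∈ ℝ^d be a regular simplex with edge length Δ, x_* the reflection of x_k through the opposite face, and L = 2Δ√((d+1)/(2d)). For p > 0, the measure ξ̂ with mass 1/(d+1) on each x_i, i ≠ k, and mass 1/(2(d+1)) on each of x_k and x_*, satisfies φ_p(ξ̂) = d/(d+1) + ψ(L)^p / (2(d+1)²), where φ_p(ξ) = ∫∫ ψ(‖x−x'‖)^p dξ(x)dξ(x'). In particular, if ψ(L) > 0 then φ_p(ξ̂) > d/(d+1) = φ_p(ξ*), where ξ* is uniform on the simplex vertices, so ξ* is not optimal. -/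
open MeasureTheory Finset

/-- The measure `ξ̂` splitting the weight of vertex `x k` between `x k` and its mirror
image `x⋆` satisfies `φ_p(ξ̂) = d/(d+1) + ψ(L)^p/(2(d+1)²)`; in particular, if
`ψ(L) > 0` this exceeds `φ_p(ξ*) = d/(d+1)` for the uniform measure `ξ*` on the
simplex vertices, so `ξ*` is not optimal. -/
theorem stmt_16 (d : ℕ) (hd : 1 ≤ d) (Δ : ℝ) (hΔ : 0 < Δ) (p : ℝ) (hp : 0 < p)
    (ψ : ℝ → ℝ) (hψm : Measurable ψ)
    (hψrange : ∀ t, 0 ≤ ψ t ∧ ψ t ≤ 1)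
    (hψΔ : ψ Δ = 1) (hψ0 : ψ 0 = 0)
    (hψmax : ∀ t, 0 ≤ t → t ≠ Δ → ψ t < 1)
    (x : Fin (d + 1) → EuclideanSpace ℝ (Fin d))
    (hdist : ∀ i j, i ≠ j → dist (x i) (x j) = Δ)
    (k : Fin (d + 1)) (xstar : EuclideanSpace ℝ (Fin d))
    (L : ℝ) (hL : L = 2 * Δ * Real.sqrt ((d + 1) / (2 * d)))
    (hstar : ∀ i, i ≠ k → dist xstar (x i) = Δ)
    (hstark : dist xstar (x k) = L)
    (φ : Measure (EuclideanSpace ℝ (Fin d)) → ℝ)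
    (hφ : φ = fun m => ∫ y, ∫ y', ψ (dist y y') ^ p ∂m ∂m)
    (ξhat ξstar : Measure (EuclideanSpace ℝ (Fin d)))
    (hξhat : ξhat = (∑ i ∈ univ \ {k}, ((d : ENNReal) + 1)⁻¹ • Measure.dirac (x i))
      + (2 * ((d : ENNReal) + 1))⁻¹ • Measure.dirac (x k)
      + (2 * ((d : ENNReal) + 1))⁻¹ • Measure.dirac xstar)
    (hξstar : ξstar = ∑ i, ((d : ENNReal) + 1)⁻¹ • Measure.dirac (x i)) :
    φ ξhat = (d : ℝ) / (d + 1) + ψ L ^ p / (2 * ((d : ℝ) + 1) ^ 2) ∧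
    φ ξstar = (d : ℝ) / (d + 1) ∧
    (0 < ψ L → φ ξstar < φ ξhat) := by
  set a : ℝ := ((d : ℝ) + 1)⁻¹ with ha
  set b : ℝ := (2 * ((d : ℝ) + 1))⁻¹ with hb
  have hdpos : (0 : ℝ) < (d : ℝ) + 1 := by positivity
  have hrp : Measurable fun t : ℝ => t ^ p := (Real.continuous_rpow_const hp.le).measurable
  -- Integrability against diracs
  have hintd : ∀ (f : EuclideanSpace ℝ (Fin d) → ℝ), Measurable f →
      ∀ (z : EuclideanSpace ℝ (Fin d)), Integrable f (Measure.dirac z) := by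
    intro f hf z
    refine ⟨hf.aestronglyMeasurable, ?_⟩
    rw [HasFiniteIntegral, lintegral_dirac]
    exact ENNReal.coe_lt_top
  have hane : ((d : ENNReal) + 1)⁻¹ ≠ ⊤ := by
    simp [ENNReal.inv_ne_top]
  have hbne : (2 * ((d : ENNReal) + 1))⁻¹ ≠ ⊤ := by
    simp [ENNReal.inv_ne_top]
  have hadd : ((d : ENNReal) + 1).toReal = (d : ℝ) + 1 := by
    rw [ENNReal.toReal_add (ENNReal.natCast_ne_top d) ENNReal.one_ne_top]
    simp
  have hatr : (((d : ENNReal) + 1)⁻¹).toReal = a := by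
    rw [ENNReal.toReal_inv, hadd]
  have hbtr : ((2 * ((d : ENNReal) + 1))⁻¹).toReal = b := by
    rw [ENNReal.toReal_inv, ENNReal.toReal_mul, hadd, hb]
    norm_num
  -- integral against ξstar
  have hIstar : ∀ (f : EuclideanSpace ℝ (Fin d) → ℝ), Measurable f →
      ∫ y, f y ∂ξstar = ∑ i, a * f (x i) := by
    intro f hf
    rw [hξstar, integral_finset_sum_measure (fun i _ =>
      (hintd f hf (x i)).smul_measure hane)]
    refine Finset.sum_congr rfl fun i _ => ?_
    rw [integral_smul_measure, integral_dirac, hatr, smul_eq_mul]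
  -- integral against ξhat
  have hIhat : ∀ (f : EuclideanSpace ℝ (Fin d) → ℝ), Measurable f →
      ∫ y, f y ∂ξhat = (∑ i ∈ univ \ {k}, a * f (x i)) + b * f (x k) + b * f xstar := by
    intro f hf
    have h1 : Integrable f (∑ i ∈ univ \ {k}, ((d : ENNReal) + 1)⁻¹ • Measure.dirac (x i)) :=
      integrable_finset_sum_measure.2 fun i _ => (hintd f hf (x i)).smul_measure hane
    have h2 : Integrable f ((2 * ((d : ENNReal) + 1))⁻¹ • Measure.dirac (x k)) :=
      (hintd f hf (x k)).smul_measure hbne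
    have h3 : Integrable f ((2 * ((d : ENNReal) + 1))⁻¹ • Measure.dirac xstar) :=
      (hintd f hf xstar).smul_measure hbne
    rw [hξhat, integral_add_measure (h1.add_measure h2) h3, integral_add_measure h1 h2,
      integral_finset_sum_measure (fun i _ => (hintd f hf (x i)).smul_measure hane)]
    rw [integral_smul_measure, integral_smul_measure, integral_dirac, integral_dirac, hbtr]
    congr 2
    refine Finset.sum_congr rfl fun i _ => ?_
    rw [integral_smul_measure, integral_dirac, hatr, smul_eq_mul]
  -- measurability of the kernel in the second variable
  have hker : ∀ y : EuclideanSpace ℝ (Fin d),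
      Measurable fun y' : EuclideanSpace ℝ (Fin d) => ψ (dist y y') ^ p := fun y =>
    hrp.comp (hψm.comp (measurable_const.dist measurable_id))
  have hker' : ∀ z : EuclideanSpace ℝ (Fin d),
      Measurable fun y : EuclideanSpace ℝ (Fin d) => ψ (dist y z) ^ p := fun z =>
    hrp.comp (hψm.comp (measurable_id.dist measurable_const))
  -- basic values
  have hself : ∀ y : EuclideanSpace ℝ (Fin d), ψ (dist y y) ^ p = 0 := by
    intro y; rw [dist_self, hψ0, Real.zero_rpow hp.ne']
  have hone : (1 : ℝ) ^ p = 1 := Real.one_rpow p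
  have hcard : (univ \ ({k} : Finset (Fin (d + 1)))).card = d := by
    rw [Finset.card_sdiff_of_subset (by simp)]
    simp
  have hcast : ((d - 1 : ℕ) : ℝ) = (d : ℝ) - 1 := by
    have := Nat.cast_sub hd (R := ℝ); simpa using this
  -- compute φ ξstar
  have hstar_val : φ ξstar = (d : ℝ) / (d + 1) := by
    rw [hφ]
    simp only
    have hinner : ∀ y : EuclideanSpace ℝ (Fin d),
        ∫ y', ψ (dist y y') ^ p ∂ξstar = ∑ i, a * ψ (dist y (x i)) ^ p :=
      fun y => hIstar _ (hker y)
    simp only [hinner]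
    rw [hIstar _ (by exact Finset.measurable_sum _ fun i _ => (hker' (x i)).const_mul a)]
    have hterm : ∀ i : Fin (d + 1), ∑ j, a * ψ (dist (x i) (x j)) ^ p = a * d := by
      intro i
      rw [← Finset.add_sum_erase _ _ (Finset.mem_univ i), hself, mul_zero, zero_add]
      rw [Finset.sum_congr rfl (fun j hj => by
        rw [hdist i j (by simpa using (Finset.mem_erase.1 hj).1.symm), hψΔ, hone])]
      rw [Finset.sum_const, Finset.card_erase_of_mem (Finset.mem_univ i), Finset.card_univ,
        Fintype.card_fin, nsmul_eq_mul]
      simp [mul_comm]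
    simp only [hterm]
    rw [Finset.sum_const, Finset.card_univ, Fintype.card_fin]
    simp only [nsmul_eq_mul, ha]
    push_cast
    field_simp
  have hL0 : 0 ≤ L := by rw [← hstark]; exact dist_nonneg
  -- compute φ ξhat
  have hhat_val : φ ξhat = (d : ℝ) / (d + 1) + ψ L ^ p / (2 * ((d : ℝ) + 1) ^ 2) := by
    rw [hφ]
    simp only
    have hinner : ∀ y : EuclideanSpace ℝ (Fin d), ∫ y', ψ (dist y y') ^ p ∂ξhat =
        (∑ i ∈ univ \ {k}, a * ψ (dist y (x i)) ^ p) + b * ψ (dist y (x k)) ^ p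
          + b * ψ (dist y xstar) ^ p :=
      fun y => hIhat _ (hker y)
    simp only [hinner]
    rw [hIhat _ (by
      refine Measurable.add (Measurable.add ?_ ?_) ?_
      · exact Finset.measurable_sum _ fun i _ => ((hker' (x i)).const_mul a)
      · exact (hker' (x k)).const_mul b
      · exact (hker' xstar).const_mul b)]
    have hSk : ∀ i ∈ univ \ ({k} : Finset (Fin (d + 1))), i ≠ k := by
      intro i hi; simpa using (Finset.mem_sdiff.1 hi).2
    -- term for y = x i, i ≠ k
    have hT1 : ∀ i ∈ univ \ ({k} : Finset (Fin (d + 1))),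
        (∑ j ∈ univ \ {k}, a * ψ (dist (x i) (x j)) ^ p) + b * ψ (dist (x i) (x k)) ^ p
          + b * ψ (dist (x i) xstar) ^ p = a * ((d : ℝ) - 1) + 2 * b := by
      intro i hi
      have h1 : ∑ j ∈ univ \ {k}, a * ψ (dist (x i) (x j)) ^ p = a * ((d : ℝ) - 1) := by
        rw [← Finset.add_sum_erase _ _ hi, hself, mul_zero, zero_add]
        rw [Finset.sum_congr rfl (fun j hj => by
          rw [hdist i j (by simpa using (Finset.mem_erase.1 hj).1.symm), hψΔ, hone])]
        rw [Finset.sum_const, Finset.card_erase_of_mem hi, hcard, nsmul_eq_mul, hcast]; ring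
      rw [h1, hdist i k (hSk i hi), dist_comm (x i) xstar, hstar i (hSk i hi), hψΔ, hone]
      ring
    rw [Finset.sum_congr rfl (fun i hi => by rw [hT1 i hi])]
    -- term for y = x k
    have hT2 : (∑ j ∈ univ \ {k}, a * ψ (dist (x k) (x j)) ^ p) + b * ψ (dist (x k) (x k)) ^ p
        + b * ψ (dist (x k) xstar) ^ p = a * d + b * ψ L ^ p := by
      have h1 : ∑ j ∈ univ \ {k}, a * ψ (dist (x k) (x j)) ^ p = a * d := by
        rw [Finset.sum_congr rfl (fun j hj => by
          rw [hdist k j (Ne.symm (hSk j hj)), hψΔ, hone])]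
        rw [Finset.sum_const, hcard, nsmul_eq_mul]; ring
      rw [h1, hself, dist_comm (x k) xstar, hstark]
      ring
    -- term for y = xstar
    have hT3 : (∑ j ∈ univ \ {k}, a * ψ (dist xstar (x j)) ^ p) + b * ψ (dist xstar (x k)) ^ p
        + b * ψ (dist xstar xstar) ^ p = a * d + b * ψ L ^ p := by
      have h1 : ∑ j ∈ univ \ {k}, a * ψ (dist xstar (x j)) ^ p = a * d := by
        rw [Finset.sum_congr rfl (fun j hj => by rw [hstar j (hSk j hj), hψΔ, hone])]
        rw [Finset.sum_const, hcard, nsmul_eq_mul]; ring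
      rw [h1, hself, hstark]
      ring
    rw [hT2, hT3, Finset.sum_const, hcard]
    simp only [nsmul_eq_mul, ha, hb]
    have hd1 : (d : ℝ) ≠ 0 := by positivity
    field_simp
    ring
  refine ⟨hhat_val, hstar_val, fun hψL => ?_⟩
  rw [hstar_val, hhat_val]
  have hpow : 0 < ψ L ^ p := Real.rpow_pos_of_pos hψL p
  have h2 : 0 < 2 * ((d : ℝ) + 1) ^ 2 := by positivity
  linarith [div_pos hpow h2]
end
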